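/- Let q(N) be the number of partitions of N into distinct positive parts (equivalently the number of finite subsets of ℕ with element sum N). Then q(N) ≤ (π/(2√(3N)))·exp(π√(N/3)) for all positive integers N. -/

import Mathlib

open Finset Real Filter

private def q (M : ℕ) : ℕ := ((Finset.range (M + 1)).powerset.filter
    (fun L => 0 ∉ L ∧ ∑ ℓ ∈ L, ℓ = M)).card

lemma sinh_aux {a : ℝ} (ha : 0 < a) :
    (1 - Real.exp (-a))⁻¹ - (1 - Real.exp (-a) ^ 2)⁻¹ ≤ 1 / (2 * a) := by
  set r := Real.exp (-a) with hrdef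
  have hrpos : 0 < r := Real.exp_pos _
  have hr1 : r < 1 := Real.exp_lt_one_iff.mpr (by linarith)
  have hmul : r * Real.exp a = 1 := by
    rw [hrdef, ← Real.exp_add]; simp
  have h2a : 2 * a ≤ Real.exp a - Real.exp (-a) := by
    have := Real.self_lt_sinh_iff.mpr ha
    rw [Real.sinh_eq] at this
    linarith
  have h1 : (0:ℝ) < 1 - r := by linarith
  have h2 : (0:ℝ) < 1 - r ^ 2 := by nlinarith
  have key : 2 * a * r ≤ 1 - r ^ 2 := by nlinarith
  have heq : (1 - r)⁻¹ - (1 - r ^ 2)⁻¹ = r / (1 - r ^ 2) := by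
    field_simp
    ring
  rw [heq, div_le_div_iff₀ h2 (by linarith)]
  nlinarith

lemma log_series {r : ℝ} (h0 : 0 ≤ r) (h1 : r < 1) :
    HasSum (fun k : ℕ => (r ^ (k + 1) - (r ^ 2) ^ (k + 1)) / (k + 1))
      (Real.log (1 + r)) := by
  have habs : |r| < 1 := by rw [abs_of_nonneg h0]; exact h1
  have habs2 : |r ^ 2| < 1 := by
    rw [abs_of_nonneg (sq_nonneg r)]; nlinarith
  have hs1 := hasSum_pow_div_log_of_abs_lt_one habs
  have hs2 := hasSum_pow_div_log_of_abs_lt_one habs2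
  have := hs1.sub hs2
  have hval : -Real.log (1 - r) - -Real.log (1 - r ^ 2) = Real.log (1 + r) := by
    have hne : (1 : ℝ) - r ≠ 0 := by linarith
    have h1r : (1:ℝ) - r ^ 2 = (1 - r) * (1 + r) := by ring
    rw [h1r, Real.log_mul hne (by linarith)]
    ring
  rw [hval] at this
  convert this using 2 with k
  · rfl
  ring

lemma basel_shift {t : ℝ} (ht : 0 < t) :
    HasSum (fun k : ℕ => 1 / (2 * t * ((k : ℝ) + 1) ^ 2)) (π ^ 2 / (12 * t)) := by
  have basel : HasSum (fun n : ℕ => 1 / (n : ℝ) ^ 2) (π ^ 2 / 6) := hasSum_zeta_two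
  have h1 : HasSum (fun k : ℕ => 1 / ((k : ℝ) + 1) ^ 2) (π ^ 2 / 6) := by
    have h2 := (hasSum_nat_add_iff (f := fun n : ℕ => 1 / (n : ℝ) ^ 2) 1
      (g := π ^ 2 / 6)).mpr (by simpa using basel)
    convert h2 using 2 with k
    · rfl
    push_cast
    ring
  have h3 := h1.mul_left (1 / (2 * t))
  have e1 : (fun k : ℕ => 1 / (2 * t * ((k : ℝ) + 1) ^ 2))
      = fun k : ℕ => 1 / (2 * t) * (1 / ((k : ℝ) + 1) ^ 2) := by
    funext k
    field_simp
  have e2 : π ^ 2 / (12 * t) = 1 / (2 * t) * (π ^ 2 / 6) := by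
    field_simp
    ring
  rw [e1, e2]
  exact h3

lemma key_sum {t : ℝ} (ht : 0 < t) (K : ℕ) :
    ∑ n ∈ Finset.Icc 1 K, Real.log (1 + Real.exp (-(t * n))) ≤ π ^ 2 / (12 * t) := by
  classical
  set h : ℕ → ℕ → ℝ := fun n k =>
    ((Real.exp (-(t * n))) ^ (k + 1) - ((Real.exp (-(t * n))) ^ 2) ^ (k + 1)) / (k + 1)
    with hdef
  have hlt1 : ∀ n : ℕ, n ∈ Finset.Icc 1 K → Real.exp (-(t * n)) < 1 := by
    intro n hn
    rw [Finset.mem_Icc] at hn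
    have : (1:ℝ) ≤ n := by exact_mod_cast hn.1
    apply Real.exp_lt_one_iff.mpr
    nlinarith
  have hsums : ∀ n ∈ Finset.Icc 1 K,
      HasSum (h n) (Real.log (1 + Real.exp (-(t * n)))) := by
    intro n hn
    exact log_series (Real.exp_pos _).le (hlt1 n hn)
  -- rewrite each log as a tsum
  have e1 : ∑ n ∈ Finset.Icc 1 K, Real.log (1 + Real.exp (-(t * n)))
      = ∑ n ∈ Finset.Icc 1 K, ∑' k, h n k := by
    apply Finset.sum_congr rfl
    intro n hn
    exact ((hsums n hn).tsum_eq).symm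
  rw [e1, ← Summable.tsum_finsetSum (fun n hn => (hsums n hn).summable)]
  -- now bound the swapped sum
  have inner : ∀ k : ℕ, ∑ n ∈ Finset.Icc 1 K, h n k ≤ 1 / (2 * t * ((k : ℝ) + 1) ^ 2) := by
    intro k
    set a : ℝ := t * ((k : ℝ) + 1) with hadef
    have ha : 0 < a := by positivity
    set ρ : ℝ := Real.exp (-a) with hρdef
    have hρ0 : 0 < ρ := Real.exp_pos _
    have hρ1 : ρ < 1 := Real.exp_lt_one_iff.mpr (by linarith)
    have hρ21 : ρ ^ 2 < 1 := by nlinarith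
    have hform : ∀ n : ℕ, h n k = (ρ ^ n - (ρ ^ 2) ^ n) / ((k : ℝ) + 1) := by
      intro n
      have a1 : (Real.exp (-(t * n))) ^ (k + 1) = ρ ^ n := by
        rw [hρdef, ← Real.exp_nat_mul, ← Real.exp_nat_mul]
        congr 1
        push_cast
        ring
      have a2 : ((Real.exp (-(t * n))) ^ 2) ^ (k + 1) = (ρ ^ 2) ^ n := by
        rw [hρdef, ← pow_mul, ← pow_mul, ← Real.exp_nat_mul, ← Real.exp_nat_mul]
        congr 1
        push_cast
        ring
      rw [hdef]
      simp only [a1, a2]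
    have hg : ∀ n : ℕ, 0 ≤ ρ ^ n - (ρ ^ 2) ^ n := by
      intro n
      rw [← pow_mul]
      have : ρ ^ (2 * n) ≤ ρ ^ n := pow_le_pow_of_le_one hρ0.le hρ1.le (by omega)
      linarith
    have hsg : HasSum (fun n : ℕ => ρ ^ n - (ρ ^ 2) ^ n) ((1 - ρ)⁻¹ - (1 - ρ ^ 2)⁻¹) :=
      (hasSum_geometric_of_lt_one hρ0.le hρ1).sub
        (hasSum_geometric_of_lt_one (by positivity) hρ21)
    have hsum_le : ∑ n ∈ Finset.Icc 1 K, (ρ ^ n - (ρ ^ 2) ^ n)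
        ≤ (1 - ρ)⁻¹ - (1 - ρ ^ 2)⁻¹ := by
      rw [← hsg.tsum_eq]
      exact Summable.sum_le_tsum _ (fun n _ => hg n) hsg.summable
    have hsinh := sinh_aux ha
    rw [← hρdef] at hsinh
    calc ∑ n ∈ Finset.Icc 1 K, h n k
        = (∑ n ∈ Finset.Icc 1 K, (ρ ^ n - (ρ ^ 2) ^ n)) / ((k : ℝ) + 1) := by
          rw [Finset.sum_div]
          exact Finset.sum_congr rfl fun n _ => hform n
      _ ≤ ((1 - ρ)⁻¹ - (1 - ρ ^ 2)⁻¹) / ((k : ℝ) + 1) := by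
          gcongr
      _ ≤ (1 / (2 * a)) / ((k : ℝ) + 1) := by
          gcongr
      _ = 1 / (2 * t * ((k : ℝ) + 1) ^ 2) := by
          rw [hadef]
          field_simp
  have hsummable_lhs : Summable (fun k : ℕ => ∑ n ∈ Finset.Icc 1 K, h n k) :=
    summable_sum (fun n hn => (hsums n hn).summable)
  calc ∑' k, ∑ n ∈ Finset.Icc 1 K, h n k
      ≤ ∑' k : ℕ, 1 / (2 * t * ((k : ℝ) + 1) ^ 2) :=
        Summable.tsum_le_tsum inner hsummable_lhs (basel_shift ht).summable
    _ = π ^ 2 / (12 * t) := (basel_shift ht).tsum_eq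

lemma comb_bound (K : ℕ) {x : ℝ} (hx : 0 ≤ x) :
    ∑ M ∈ Finset.Icc 1 K, (q M : ℝ) * x ^ M ≤ ∏ n ∈ Finset.Icc 1 K, (1 + x ^ n) := by
  classical
  set A : ℕ → Finset (Finset ℕ) := fun M =>
    (Finset.Icc 1 K).powerset.filter (fun S => ∑ ℓ ∈ S, ℓ = M) with hA
  have hfiber : ∀ M, M ≤ K → A M = (Finset.range (M + 1)).powerset.filter
      (fun L => 0 ∉ L ∧ ∑ ℓ ∈ L, ℓ = M) := by
    intro M hMK
    ext S
    simp only [hA, Finset.mem_filter, Finset.mem_powerset]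
    constructor
    · rintro ⟨hsub, hsum⟩
      have h0 : 0 ∉ S := by
        intro h
        have := hsub h
        simp [Finset.mem_Icc] at this
      refine ⟨?_, h0, hsum⟩
      intro a ha
      have h1 : a ≤ ∑ ℓ ∈ S, ℓ :=
        Finset.single_le_sum (f := fun i => i) (fun i _ => Nat.zero_le i) ha
      rw [Finset.mem_range]
      omega
    · rintro ⟨hsub, h0, hsum⟩
      refine ⟨?_, hsum⟩
      intro a ha
      have h1 : a ≤ ∑ ℓ ∈ S, ℓ :=
        Finset.single_le_sum (f := fun i => i) (fun i _ => Nat.zero_le i) ha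
      have h2 : a ≠ 0 := fun h => h0 (h ▸ ha)
      rw [Finset.mem_Icc]
      omega
  have hcard : ∀ M ∈ Finset.Icc 1 K, (A M).card = q M := by
    intro M hM
    rw [hfiber M (Finset.mem_Icc.mp hM).2, q]
  have step1 : ∀ M ∈ Finset.Icc 1 K,
      (q M : ℝ) * x ^ M = ∑ S ∈ A M, x ^ (∑ ℓ ∈ S, ℓ) := by
    intro M hM
    have hc : ∀ S ∈ A M, x ^ (∑ ℓ ∈ S, ℓ) = x ^ M := by
      intro S hS
      rw [(Finset.mem_filter.mp hS).2]
    rw [Finset.sum_congr rfl hc, Finset.sum_const, hcard M hM, nsmul_eq_mul]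
  have hdisj : (↑(Finset.Icc 1 K) : Set ℕ).PairwiseDisjoint A := by
    intro M _ M' _ hMM'
    apply Finset.disjoint_left.mpr
    intro S hS hS'
    apply hMM'
    have h1 := (Finset.mem_filter.mp hS).2
    have h2 := (Finset.mem_filter.mp hS').2
    omega
  calc ∑ M ∈ Finset.Icc 1 K, (q M : ℝ) * x ^ M
      = ∑ M ∈ Finset.Icc 1 K, ∑ S ∈ A M, x ^ (∑ ℓ ∈ S, ℓ) := Finset.sum_congr rfl step1
    _ = ∑ S ∈ (Finset.Icc 1 K).biUnion A, x ^ (∑ ℓ ∈ S, ℓ) := (Finset.sum_biUnion hdisj).symm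
    _ ≤ ∑ S ∈ (Finset.Icc 1 K).powerset, x ^ (∑ ℓ ∈ S, ℓ) := by
        apply Finset.sum_le_sum_of_subset_of_nonneg
        · exact Finset.biUnion_subset.mpr fun M _ => Finset.filter_subset _ _
        · intro S _ _
          positivity
    _ = ∏ n ∈ Finset.Icc 1 K, (x ^ n + 1) := by
        rw [Finset.prod_add]
        apply Finset.sum_congr rfl
        intro S hS
        simp only [Finset.prod_const_one, mul_one]
        exact (Finset.prod_pow_eq_pow_sum S (fun i => i) x).symm
    _ = ∏ n ∈ Finset.Icc 1 K, (1 + x ^ n) := by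
        apply Finset.prod_congr rfl
        intro n _
        ring

lemma q_mono {N M : ℕ} (hN : 1 ≤ N) (hNM : N ≤ M) : q N ≤ q M := by
  classical
  set d := M - N with hd
  set f : Finset ℕ → Finset ℕ := fun L =>
    if h : L.Nonempty then insert (L.max' h + d) (L.erase (L.max' h)) else ∅ with hf
  rw [q, q]
  apply Finset.card_le_card_of_injOn f
  · -- maps to
    intro L hL
    simp only [Finset.mem_coe, Finset.mem_filter, Finset.mem_powerset] at hL
    obtain ⟨hsub, h0, hsum⟩ := hL
    have hne : L.Nonempty := by
      rcases Finset.eq_empty_or_nonempty L with h | h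
      · subst h; simp at hsum; omega
      · exact h
    set a := L.max' hne with ha
    have hamem : a ∈ L := L.max'_mem hne
    have hapos : 1 ≤ a := by
      rcases Nat.eq_zero_or_pos a with h | h
      · exact absurd (h ▸ hamem) h0
      · exact h
    have haleN : a ≤ N := by
      have h1 : a ≤ ∑ ℓ ∈ L, ℓ :=
        Finset.single_le_sum (f := fun i => i) (fun i _ => Nat.zero_le i) hamem
      omega
    have herase_lt : ∀ x ∈ L.erase a, x < a := by
      intro x hx
      have h1 : x ≠ a := (Finset.mem_erase.mp hx).1
      have h2 : x ≤ a := L.le_max' x (Finset.mem_erase.mp hx).2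
      omega
    have hnm : a + d ∉ L.erase a := by
      intro h
      have := herase_lt _ h
      omega
    have hfL : f L = insert (a + d) (L.erase a) := by rw [hf]; simp [hne, ha]
    simp only [Finset.mem_coe, Finset.mem_filter, Finset.mem_powerset, hfL]
    refine ⟨?_, ?_, ?_⟩
    · intro b hb
      rcases Finset.mem_insert.mp hb with h | h
      · rw [Finset.mem_range]; omega
      · have := hsub (Finset.mem_erase.mp h).2
        rw [Finset.mem_range] at this ⊢
        omega
    · intro h
      rcases Finset.mem_insert.mp h with h | h
      · omega
      · exact h0 (Finset.mem_erase.mp h).2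
    · rw [Finset.sum_insert hnm]
      have := Finset.sum_erase_add L (fun i => i) hamem
      omega
  · -- injective
    intro L₁ h₁ L₂ h₂ heq
    simp only [Finset.coe_filter, Set.mem_setOf_eq, Finset.mem_powerset] at h₁ h₂
    obtain ⟨hsub₁, h01, hsum₁⟩ := h₁
    obtain ⟨hsub₂, h02, hsum₂⟩ := h₂
    have hne₁ : L₁.Nonempty := by
      rcases Finset.eq_empty_or_nonempty L₁ with h | h
      · subst h; simp at hsum₁; omega
      · exact h
    have hne₂ : L₂.Nonempty := by
      rcases Finset.eq_empty_or_nonempty L₂ with h | h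
      · subst h; simp at hsum₂; omega
      · exact h
    -- general facts about f L for L in the source
    have key : ∀ (L : Finset ℕ) (hne : L.Nonempty), 0 ∉ L →
        (f L).max = some (L.max' hne + d) ∧ (f L).erase (L.max' hne + d) = L.erase (L.max' hne) := by
      intro L hne h0
      set a := L.max' hne with ha
      have hamem : a ∈ L := L.max'_mem hne
      have herase_lt : ∀ x ∈ L.erase a, x < a := by
        intro x hx
        have h1 : x ≠ a := (Finset.mem_erase.mp hx).1
        have h2 : x ≤ a := L.le_max' x (Finset.mem_erase.mp hx).2
        omega
      have hnm : a + d ∉ L.erase a := by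
        intro h
        have := herase_lt _ h
        omega
      have hfL : f L = insert (a + d) (L.erase a) := by rw [hf]; simp [hne, ha]
      constructor
      · rw [hfL]
        have hfne : (insert (a + d) (L.erase a)).Nonempty := Finset.insert_nonempty _ _
        rw [← Finset.coe_max' hfne]
        congr 1
        apply le_antisymm
        · apply Finset.max'_le
          intro y hy
          rcases Finset.mem_insert.mp hy with h | h
          · omega
          · have := herase_lt _ h; omega
        · exact Finset.le_max' _ _ (Finset.mem_insert_self _ _)
      · rw [hfL, Finset.erase_insert hnm]
    obtain ⟨hmax₁, her₁⟩ := key L₁ hne₁ h01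
    obtain ⟨hmax₂, her₂⟩ := key L₂ hne₂ h02
    have hmaxeq : L₁.max' hne₁ + d = L₂.max' hne₂ + d := by
      have : (f L₁).max = (f L₂).max := by rw [heq]
      rw [hmax₁, hmax₂] at this
      exact_mod_cast Option.some_injective _ this
    have haeq : L₁.max' hne₁ = L₂.max' hne₂ := by omega
    have hereq : L₁.erase (L₁.max' hne₁) = L₂.erase (L₂.max' hne₂) := by
      rw [← her₁, ← her₂, heq, hmaxeq]
    calc L₁ = insert (L₁.max' hne₁) (L₁.erase (L₁.max' hne₁)) :=
          (Finset.insert_erase (L₁.max'_mem hne₁)).symm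
      _ = insert (L₂.max' hne₂) (L₂.erase (L₂.max' hne₂)) := by rw [hereq, haeq]
      _ = L₂ := Finset.insert_erase (L₂.max'_mem hne₂)

theorem distinct_partition_count_bound (N : ℕ) (hN : 1 ≤ N) :
    ((((Finset.range (N + 1)).powerset.filter
        (fun L => 0 ∉ L ∧ ∑ ℓ ∈ L, ℓ = N)).card : ℝ))
      ≤ Real.pi / (2 * Real.sqrt (3 * N)) * Real.exp (Real.pi * Real.sqrt (N / 3)) := by
  have hNpos : (0:ℝ) < N := by exact_mod_cast hN
  set s : ℝ := Real.sqrt (3 * N) with hs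
  have hspos : 0 < s := Real.sqrt_pos.mpr (by positivity)
  have hs2 : s ^ 2 = 3 * N := Real.sq_sqrt (by positivity)
  set t : ℝ := π / (2 * s) with htdef
  have ht : 0 < t := by
    apply div_pos Real.pi_pos
    positivity
  set x : ℝ := Real.exp (-t) with hx
  have hx0 : 0 < x := Real.exp_pos _
  have hx1 : x < 1 := Real.exp_lt_one_iff.mpr (by linarith)
  have hxn : ∀ n : ℕ, x ^ n = Real.exp (-(t * n)) := by
    intro n
    rw [hx, ← Real.exp_nat_mul]
    congr 1
    ring
  -- step 2: for each K', partial sum bound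
  have step2 : ∀ K' : ℕ,
      (q N : ℝ) * ∑ j ∈ Finset.range (K' + 1), x ^ (N + j) ≤ Real.exp (π ^ 2 / (12 * t)) := by
    intro K'
    set K := N + K' with hK
    have c1 : (q N : ℝ) * ∑ j ∈ Finset.range (K' + 1), x ^ (N + j)
        = ∑ M ∈ Finset.Icc N K, (q N : ℝ) * x ^ M := by
      rw [Finset.mul_sum]
      rw [show Finset.Icc N K = Finset.Ico N (K + 1) by rfl, Finset.sum_Ico_eq_sum_range]
      rw [show K + 1 - N = K' + 1 by omega]
    have c2 : ∑ M ∈ Finset.Icc N K, (q N : ℝ) * x ^ M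
        ≤ ∑ M ∈ Finset.Icc N K, (q M : ℝ) * x ^ M := by
      apply Finset.sum_le_sum
      intro M hM
      have hNM : N ≤ M := (Finset.mem_Icc.mp hM).1
      have := q_mono hN hNM
      have hq : (q N : ℝ) ≤ q M := by exact_mod_cast this
      have : (0:ℝ) ≤ x ^ M := by positivity
      nlinarith
    have c3 : ∑ M ∈ Finset.Icc N K, (q M : ℝ) * x ^ M
        ≤ ∑ M ∈ Finset.Icc 1 K, (q M : ℝ) * x ^ M := by
      apply Finset.sum_le_sum_of_subset_of_nonneg
      · apply Finset.Icc_subset_Icc_left hN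
      · intro M _ _
        positivity
    have c4 := comb_bound K hx0.le
    have c5 : ∏ n ∈ Finset.Icc 1 K, (1 + x ^ n) ≤ Real.exp (π ^ 2 / (12 * t)) := by
      have e1 : ∏ n ∈ Finset.Icc 1 K, (1 + x ^ n)
          = Real.exp (∑ n ∈ Finset.Icc 1 K, Real.log (1 + Real.exp (-(t * n)))) := by
        rw [Real.exp_sum]
        apply Finset.prod_congr rfl
        intro n _
        rw [Real.exp_log (by positivity : (0:ℝ) < 1 + Real.exp (-(t * n))), hxn n]
      rw [e1]
      exact Real.exp_le_exp.mpr (key_sum ht K)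
    rw [c1]
    exact le_trans (le_trans (le_trans c2 c3) c4) c5
  -- step 3: pass to the limit
  have hsumm : Summable (fun j : ℕ => x ^ (N + j)) := by
    simp_rw [pow_add]
    exact (summable_geometric_of_lt_one hx0.le hx1).mul_left _
  have htend : Tendsto (fun K' : ℕ => (q N : ℝ) * ∑ j ∈ Finset.range (K' + 1), x ^ (N + j))
      atTop (nhds ((q N : ℝ) * ∑' j : ℕ, x ^ (N + j))) := by
    apply Tendsto.const_mul
    exact hsumm.hasSum.tendsto_sum_nat.comp (tendsto_add_atTop_nat 1)
  have hlim : (q N : ℝ) * ∑' j : ℕ, x ^ (N + j) ≤ Real.exp (π ^ 2 / (12 * t)) :=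
    le_of_tendsto htend (Filter.Eventually.of_forall step2)
  have htsum : ∑' j : ℕ, x ^ (N + j) = x ^ N * (1 - x)⁻¹ := by
    simp_rw [pow_add]
    rw [tsum_mul_left, tsum_geometric_of_lt_one hx0.le hx1]
  rw [htsum] at hlim
  -- step 4: rearrange
  have hfac : 0 < x ^ N * (1 - x)⁻¹ := by
    apply mul_pos (by positivity)
    rw [inv_pos]
    linarith
  have hmain : (q N : ℝ) ≤ (1 - x) * Real.exp (t * N) * Real.exp (π ^ 2 / (12 * t)) := by
    rw [← le_div_iff₀ hfac] at hlim
    calc (q N : ℝ) ≤ Real.exp (π ^ 2 / (12 * t)) / (x ^ N * (1 - x)⁻¹) := hlim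
      _ = (1 - x) * Real.exp (t * N) * Real.exp (π ^ 2 / (12 * t)) := by
          rw [hxn N, Real.exp_neg]
          have h1 : (0:ℝ) < 1 - x := by linarith
          have h2 : (0:ℝ) < Real.exp (t * N) := Real.exp_pos _
          field_simp
  have h1x : 1 - x ≤ t := by
    have := Real.add_one_le_exp (-t)
    rw [hx]
    linarith
  have hexp_eq : t * N + π ^ 2 / (12 * t) = π * Real.sqrt (N / 3) := by
    have hsq3 : Real.sqrt ((N : ℝ) / 3) = s / 3 := by
      rw [show (N : ℝ) / 3 = (s / 3) ^ 2 by rw [div_pow, hs2]; ring]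
      exact Real.sqrt_sq (by positivity)
    rw [hsq3, htdef]
    have hπ : (0:ℝ) < π := Real.pi_pos
    field_simp
    nlinarith [hs2]
  calc ((q N : ℕ) : ℝ) ≤ (1 - x) * Real.exp (t * N) * Real.exp (π ^ 2 / (12 * t)) := hmain
    _ ≤ t * (Real.exp (t * N) * Real.exp (π ^ 2 / (12 * t))) := by
        have hp : (0:ℝ) < Real.exp (t * N) * Real.exp (π ^ 2 / (12 * t)) := by positivity
        rw [mul_assoc]
        exact mul_le_mul_of_nonneg_right h1x hp.le
    _ = t * Real.exp (t * N + π ^ 2 / (12 * t)) := by rw [Real.exp_add]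
    _ = π / (2 * Real.sqrt (3 * N)) * Real.exp (π * Real.sqrt (N / 3)) := by
        rw [hexp_eq, htdef, hs]
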